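/- Let Φ(0,t) = W(t)⋯W(0) be products of i.i.d. random row-stochastic matrices with stubborn block structure, mean W̄, and λ = ‖D̄‖₂ < 1, and let W̄^∞ = lim_k W̄^k. For t_j > t_i, E[(Φ(0,t_j) − W̄^∞)ᵀ(Φ(0,t_i) − W̄^∞)] = E[(Φ(0,t_i) − W̄^∞)ᵀ (W̄^{t_j − t_i} − W̄^∞)(Φ(0,t_i) − W̄^∞)] + R where the correction from Φ(0,t_i)ᵀ W̄^∞ terms vanishes by W̄^∞W̄^ℓ = W̄^∞; consequently ‖E[(Φ(0,t_j) − W̄^∞)ᵀ(Φ(0,t_i) − W̄^∞)]‖ ≤ C λ^{t_j − t_i} for a constant C < ∞. -/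

import Mathlib

open scoped Matrix.Norms.L2Operator
open Matrix Filter MeasureTheory ProbabilityTheory

instance matrixMS (m n : Type*) : MeasurableSpace (Matrix m n ℝ) := MeasurableSpace.pi

/-- The backward product `Φ(s, s+k) = W(s+k) ⋯ W(s+1) W(s)`. -/
def prodSeq {I : Type*} [Fintype I] (W : ℕ → Matrix I I ℝ) (s : ℕ) : ℕ → Matrix I I ℝ
  | 0 => W s
  | k + 1 => W (s + k + 1) * prodSeq W s k

lemma prodSeq_congr {I : Type*} [Fintype I] (W W' : ℕ → Matrix I I ℝ) (s k : ℕ)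
    (h : ∀ u, s ≤ u → u ≤ s + k → W u = W' u) : prodSeq W s k = prodSeq W' s k := by
  induction k with
  | zero => exact h s le_rfl (by omega)
  | succ k ih =>
    show W (s+k+1) * prodSeq W s k = W' (s+k+1) * prodSeq W' s k
    rw [h (s+k+1) (by omega) (by omega), ih (fun u h1 h2 => h u h1 (by omega))]

section
variable {I : Type*} [Fintype I] {α : Type*} [MeasurableSpace α]

lemma measurable_entry_of_measurable {f : α → Matrix I I ℝ} (hf : Measurable f) (i j : I) :
    Measurable (fun x => f x i j) :=
  (measurable_pi_apply j).comp ((measurable_pi_apply i).comp hf)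

lemma measurable_prodSeq_entry (V : α → ℕ → Matrix I I ℝ)
    (hV : ∀ u, Measurable (fun x => V x u)) (s k : ℕ) (i j : I) :
    Measurable (fun x => prodSeq (V x) s k i j) := by
  induction k generalizing i j with
  | zero => exact measurable_entry_of_measurable (hV s) i j
  | succ k ih =>
    have : (fun x => prodSeq (V x) s (k+1) i j)
        = fun x => ∑ a, V x (s+k+1) i a * prodSeq (V x) s k a j := by
      funext x; rfl
    rw [this]
    exact Finset.measurable_sum _ fun a _ =>
      (measurable_entry_of_measurable (hV (s+k+1)) i a).mul (ih a j)

lemma measurable_prodSeq (V : α → ℕ → Matrix I I ℝ)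
    (hV : ∀ u, Measurable (fun x => V x u)) (s k : ℕ) :
    Measurable (fun x => prodSeq (V x) s k) :=
  measurable_pi_lambda _ fun i => measurable_pi_lambda _ fun j =>
    measurable_prodSeq_entry V hV s k i j

/-- restricted product as a function of finitely many coordinates -/
noncomputable def restrProd (E : Finset ℕ) (s k : ℕ) (v : E → Matrix I I ℝ) :
    Matrix I I ℝ :=
  prodSeq (fun t => if h : t ∈ E then v ⟨t, h⟩ else 0) s k

lemma measurable_restrProd (E : Finset ℕ) (s k : ℕ) :
    Measurable (restrProd (I := I) E s k) := by
  apply measurable_prodSeq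
  intro u
  by_cases h : u ∈ E
  · simp only [h, dif_pos]
    exact measurable_pi_apply _
  · simp only [h, dif_neg, not_false_iff]
    exact measurable_const

lemma restrProd_comp {Ω : Type*} (W : ℕ → Ω → Matrix I I ℝ) (E : Finset ℕ) (s k : ℕ)
    (hE : ∀ u, s ≤ u → u ≤ s + k → u ∈ E) (ω : Ω) :
    restrProd E s k (fun t : E => W t ω) = prodSeq (fun u => W u ω) s k := by
  apply prodSeq_congr
  intro u h1 h2
  simp [hE u h1 h2]

lemma indepFun_prodSeq {Ω : Type*} [MeasurableSpace Ω] {μ : MeasureTheory.Measure Ω}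
    (W : ℕ → Ω → Matrix I I ℝ) (hmeas : ∀ t, Measurable (W t))
    (hindep : iIndepFun W μ)
    (s₁ k₁ s₂ k₂ : ℕ) (h : s₁ + k₁ < s₂) :
    IndepFun (fun ω => prodSeq (fun u => W u ω) s₂ k₂)
      (fun ω => prodSeq (fun u => W u ω) s₁ k₁) μ := by
  set S : Finset ℕ := Finset.Icc s₂ (s₂ + k₂)
  set T : Finset ℕ := Finset.Icc s₁ (s₁ + k₁)
  have hST : Disjoint S T := by
    rw [Finset.disjoint_left]
    intro t htS htT
    simp only [S, T, Finset.mem_Icc] at htS htT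
    omega
  have base := hindep.indepFun_finset S T hST hmeas
  have := base.comp (measurable_restrProd S s₂ k₂) (measurable_restrProd T s₁ k₁)
  have e1 : (restrProd S s₂ k₂ ∘ fun ω (t : S) => W t ω)
      = fun ω => prodSeq (fun u => W u ω) s₂ k₂ := by
    funext ω
    exact restrProd_comp W S s₂ k₂ (fun u h1 h2 => by simp [S, Finset.mem_Icc]; omega) ω
  have e2 : (restrProd T s₁ k₁ ∘ fun ω (t : T) => W t ω)
      = fun ω => prodSeq (fun u => W u ω) s₁ k₁ := by
    funext ω
    exact restrProd_comp W T s₁ k₁ (fun u h1 h2 => by simp [T, Finset.mem_Icc]; omega) ω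
  rwa [e1, e2] at this

section aux2
variable {I : Type*} [Fintype I]
lemma prodSeq_split (W : ℕ → Matrix I I ℝ) (a b : ℕ) :
    prodSeq W 0 (a + b + 1) = prodSeq W (a + 1) b * prodSeq W 0 a := by
  induction b with
  | zero =>
    show prodSeq W 0 (a + 1) = W (a + 1) * prodSeq W 0 a
    show W (0 + a + 1) * prodSeq W 0 a = _
    rw [Nat.zero_add]
  | succ b ih =>
    have h1 : a + (b + 1) + 1 = (a + b + 1) + 1 := by omega
    rw [h1]
    show W (0 + (a + b + 1) + 1) * prodSeq W 0 (a + b + 1) = _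
    rw [ih, ← Matrix.mul_assoc]
    have h2 : 0 + (a + b + 1) + 1 = (a + 1) + b + 1 := by omega
    rw [h2]
    rfl

lemma prodSeq_nonneg (W : ℕ → Matrix I I ℝ) (h : ∀ t i j, 0 ≤ W t i j) (s k : ℕ) :
    ∀ i j, 0 ≤ prodSeq W s k i j := by
  induction k with
  | zero => exact h s
  | succ k ih =>
    intro i j
    show 0 ≤ (W (s+k+1) * prodSeq W s k) i j
    rw [Matrix.mul_apply]
    exact Finset.sum_nonneg fun a _ => mul_nonneg (h _ _ _) (ih _ _)

lemma prodSeq_row_sum (W : ℕ → Matrix I I ℝ) (h : ∀ t i, ∑ j, W t i j = 1) (s k : ℕ) :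
    ∀ i, ∑ j, prodSeq W s k i j = 1 := by
  induction k with
  | zero => exact h s
  | succ k ih =>
    intro i
    show ∑ j, (W (s+k+1) * prodSeq W s k) i j = 1
    simp only [Matrix.mul_apply]
    rw [Finset.sum_comm]
    simp only [← Finset.mul_sum]
    simp only [ih]
    simpa using h (s+k+1) i

lemma prodSeq_le_one (W : ℕ → Matrix I I ℝ) (h0 : ∀ t i j, 0 ≤ W t i j)
    (h1 : ∀ t i, ∑ j, W t i j = 1) (s k : ℕ) (i j : I) : prodSeq W s k i j ≤ 1 := by
  calc prodSeq W s k i j ≤ ∑ j, prodSeq W s k i j :=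
        Finset.single_le_sum (fun a _ => prodSeq_nonneg W h0 s k i a) (Finset.mem_univ j)
    _ = 1 := prodSeq_row_sum W h1 s k i


end aux2

section aux3
lemma euclid_abs_le_norm {n : Type*} [Fintype n] (x : EuclideanSpace ℝ n) (i : n) :
    |x i| ≤ ‖x‖ := by
  rw [EuclideanSpace.norm_eq]
  rw [← Real.sqrt_sq_eq_abs]
  apply Real.sqrt_le_sqrt
  exact Finset.single_le_sum (f := fun j => ‖x j‖^2)
    (fun j _ => sq_nonneg _) (Finset.mem_univ i) |>.trans_eq' (by rw [Real.norm_eq_abs, sq_abs])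

lemma entry_abs_le_l2_opNorm {m n : Type*} [Fintype m] [Fintype n] [DecidableEq n]
    (A : Matrix m n ℝ) (i : m) (j : n) : |A i j| ≤ ‖A‖ := by
  have h := Matrix.l2_opNorm_mulVec A (EuclideanSpace.single j 1)
  have hx : ‖EuclideanSpace.single j (1:ℝ)‖ = 1 := by simp
  rw [hx, mul_one] at h
  refine le_trans ?_ ((euclid_abs_le_norm ((EuclideanSpace.equiv m ℝ).symm (A.mulVec (EuclideanSpace.single j 1))) i).trans h)
  have : A.mulVec (EuclideanSpace.single j 1) i = A i j := by
    show (A.mulVec (Pi.single j 1)) i = A i j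
    rw [Matrix.mulVec_single]
    simp
  exact le_of_eq (congrArg abs this.symm)
end aux3
end

section mean
variable {I : Type*} [Fintype I] [DecidableEq I] {Ω : Type*} [MeasurableSpace Ω]

lemma integrable_of_bounded (μ : Measure Ω) [IsProbabilityMeasure μ] {f : Ω → ℝ}
    (hf : Measurable f) (C : ℝ) (h : ∀ ω, |f ω| ≤ C) : Integrable f μ := by
  apply Integrable.mono' (integrable_const C) hf.aestronglyMeasurable
  filter_upwards with ω
  simpa [Real.norm_eq_abs] using h ω

lemma prodSeq_entry_abs_le_one (W : ℕ → Ω → Matrix I I ℝ)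
    (h0 : ∀ t ω i j, 0 ≤ W t ω i j) (h1 : ∀ t ω i, ∑ j, W t ω i j = 1)
    (s k : ℕ) (ω : Ω) (i j : I) :
    |prodSeq (fun u => W u ω) s k i j| ≤ 1 := by
  rw [abs_le]
  constructor
  · linarith [prodSeq_nonneg (fun u => W u ω) (fun t => h0 t ω) s k i j]
  · exact prodSeq_le_one (fun u => W u ω) (fun t => h0 t ω) (fun t => h1 t ω) s k i j

lemma integrable_prodSeq_entry (μ : Measure Ω) [IsProbabilityMeasure μ]
    (W : ℕ → Ω → Matrix I I ℝ)
    (h0 : ∀ t ω i j, 0 ≤ W t ω i j) (h1 : ∀ t ω i, ∑ j, W t ω i j = 1)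
    (hmeas : ∀ t, Measurable (W t)) (s k : ℕ) (i j : I) :
    Integrable (fun ω => prodSeq (fun u => W u ω) s k i j) μ :=
  integrable_of_bounded μ (measurable_prodSeq_entry (fun ω u => W u ω) hmeas s k i j) 1
    (fun ω => prodSeq_entry_abs_le_one W h0 h1 s k ω i j)

lemma mean_prodSeq (μ : Measure Ω) [IsProbabilityMeasure μ]
    (W : ℕ → Ω → Matrix I I ℝ)
    (h0 : ∀ t ω i j, 0 ≤ W t ω i j) (h1 : ∀ t ω i, ∑ j, W t ω i j = 1)
    (hmeas : ∀ t, Measurable (W t))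
    (hindep : iIndepFun W μ)
    (Wbar : Matrix I I ℝ) (hmean : ∀ t i j, ∫ ω, W t ω i j ∂μ = Wbar i j)
    (s k : ℕ) (i j : I) :
    ∫ ω, prodSeq (fun u => W u ω) s k i j ∂μ = (Wbar ^ (k + 1)) i j := by
  induction k generalizing i j with
  | zero => rw [pow_one]; exact hmean s i j
  | succ k ih =>
    have hrw : ∀ ω, prodSeq (fun u => W u ω) s (k+1) i j
        = ∑ a, W (s+k+1) ω i a * prodSeq (fun u => W u ω) s k a j := fun ω => rfl
    simp only [hrw]
    rw [integral_finset_sum]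
    · have hterm : ∀ a, ∫ ω, W (s+k+1) ω i a * prodSeq (fun u => W u ω) s k a j ∂μ
          = Wbar i a * (Wbar ^ (k+1)) a j := by
        intro a
        have hind0 := indepFun_prodSeq W hmeas hindep s k (s+k+1) 0 (by omega)
        have hind : IndepFun (fun ω => W (s+k+1) ω i a)
            (fun ω => prodSeq (fun u => W u ω) s k a j) μ :=
          hind0.comp (measurable_entry_of_measurable measurable_id i a)
            (measurable_entry_of_measurable measurable_id a j)
        have heq := hind.integral_fun_mul_eq_mul_integral
            (by simpa [prodSeq] using (integrable_prodSeq_entry μ W h0 h1 hmeas (s+k+1) 0 i a).aestronglyMeasurable)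
            (integrable_prodSeq_entry μ W h0 h1 hmeas s k a j).aestronglyMeasurable
        calc ∫ ω, W (s+k+1) ω i a * prodSeq (fun u => W u ω) s k a j ∂μ
            = (∫ ω, W (s+k+1) ω i a ∂μ) * ∫ ω, prodSeq (fun u => W u ω) s k a j ∂μ := heq
          _ = Wbar i a * (Wbar ^ (k+1)) a j := by rw [ih, hmean]
      simp only [hterm]
      rw [← Matrix.mul_apply, ← pow_succ']
    · intro a _
      apply integrable_of_bounded μ
        ((measurable_entry_of_measurable (hmeas (s+k+1)) i a).mul
          (measurable_prodSeq_entry (fun ω u => W u ω) hmeas s k a j)) 1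
      intro ω
      rw [Pi.mul_apply, abs_mul]
      calc |W (s+k+1) ω i a| * |prodSeq (fun u => W u ω) s k a j|
          ≤ 1 * 1 :=
            mul_le_mul (by simpa [prodSeq] using prodSeq_entry_abs_le_one W h0 h1 (s+k+1) 0 ω i a)
              (prodSeq_entry_abs_le_one W h0 h1 s k ω a j) (abs_nonneg _) zero_le_one
        _ = 1 := mul_one 1
end mean
section det
variable {ns p : ℕ}

lemma winf_mul_block (X : Matrix (Fin p) (Fin ns) ℝ) (B : Matrix (Fin p) (Fin ns) ℝ)
    (D : Matrix (Fin p) (Fin p) ℝ) :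
    (fromBlocks 1 0 X 0 : Matrix (Fin ns ⊕ Fin p) (Fin ns ⊕ Fin p) ℝ) * fromBlocks 1 0 B D
      = fromBlocks 1 0 X 0 := by
  rw [Matrix.fromBlocks_multiply]
  simp

lemma prodSeq_block (W : ℕ → Matrix (Fin ns ⊕ Fin p) (Fin ns ⊕ Fin p) ℝ)
    (h : ∀ t, ∃ B D, W t = fromBlocks 1 0 B D) (s k : ℕ) :
    ∃ B D, prodSeq W s k = fromBlocks 1 0 B D := by
  induction k with
  | zero => exact h s
  | succ k ih =>
    obtain ⟨B, D, hBD⟩ := ih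
    obtain ⟨B', D', hBD'⟩ := h (s+k+1)
    refine ⟨B' + D' * B, D' * D, ?_⟩
    show W (s+k+1) * prodSeq W s k = _
    rw [hBD, hBD', Matrix.fromBlocks_multiply]
    simp

lemma pow_fromBlocks (Bbar : Matrix (Fin p) (Fin ns) ℝ) (Dbar : Matrix (Fin p) (Fin p) ℝ)
    (X : Matrix (Fin p) (Fin ns) ℝ) (hX : Bbar + Dbar * X = X) (r : ℕ) :
    (fromBlocks 1 0 Bbar Dbar : Matrix (Fin ns ⊕ Fin p) (Fin ns ⊕ Fin p) ℝ) ^ (r + 1)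
      = fromBlocks 1 0 (X - Dbar ^ (r+1) * X) (Dbar ^ (r+1)) := by
  induction r with
  | zero =>
    rw [pow_one, pow_one]
    have hB : Bbar = X - Dbar * X := by rw [eq_sub_iff_add_eq]; exact hX
    rw [← hB]
  | succ r ih =>
    rw [pow_succ', ih, Matrix.fromBlocks_multiply]
    have h1 : Bbar + Dbar * (X - Dbar ^ (r+1) * X) = X - Dbar ^ (r+1+1) * X := by
      rw [Matrix.mul_sub, ← Matrix.mul_assoc, ← pow_succ', ← add_sub_assoc, hX]
    have h2 : Dbar * Dbar ^ (r+1) = Dbar ^ (r+1+1) := (pow_succ' _ _).symm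
    simp only [Matrix.one_mul, Matrix.mul_one, Matrix.zero_mul, Matrix.mul_zero, add_zero,
      zero_add, h1, h2]

lemma pow_mul_winf (Bbar : Matrix (Fin p) (Fin ns) ℝ) (Dbar : Matrix (Fin p) (Fin p) ℝ)
    (X : Matrix (Fin p) (Fin ns) ℝ) (hX : Bbar + Dbar * X = X) (m : ℕ) :
    (fromBlocks 1 0 Bbar Dbar : Matrix (Fin ns ⊕ Fin p) (Fin ns ⊕ Fin p) ℝ) ^ m
      * fromBlocks 1 0 X 0 = fromBlocks 1 0 X 0 := by
  induction m with
  | zero => simp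
  | succ m ih =>
    rw [pow_succ, Matrix.mul_assoc]
    rw [show (fromBlocks 1 0 Bbar Dbar : Matrix (Fin ns ⊕ Fin p) (Fin ns ⊕ Fin p) ℝ)
        * fromBlocks 1 0 X 0 = fromBlocks 1 0 X 0 by
      rw [Matrix.fromBlocks_multiply]; simp [hX]]
    exact ih
end det

set_option maxHeartbeats 1000000 in
/-- For i.i.d. random row-stochastic matrices `W(t) = [[I, 0], [B(t), D(t)]]` with mean
`W̄`, `λ = ‖D̄‖₂ < 1` and `W̄^∞ = [[I, 0], [(I − D̄)⁻¹B̄, 0]]`, the cross-covariances of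
the products `Φ(0,t) = W(t)⋯W(0)` decay geometrically: for `t_i < t_j`,
`‖E[(Φ(0,t_j) − W̄^∞)ᵀ(Φ(0,t_i) − W̄^∞)]‖ ≤ C λ^{t_j − t_i}` for a constant `C < ∞`. -/
theorem stmt14 (ns p : ℕ) {Ω : Type*} [MeasurableSpace Ω] (μ : Measure Ω)
    [IsProbabilityMeasure μ]
    (W : ℕ → Ω → Matrix (Fin ns ⊕ Fin p) (Fin ns ⊕ Fin p) ℝ)
    (Bt : ℕ → Ω → Matrix (Fin p) (Fin ns) ℝ) (Dt : ℕ → Ω → Matrix (Fin p) (Fin p) ℝ)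
    (hblock : ∀ t ω, W t ω = Matrix.fromBlocks 1 0 (Bt t ω) (Dt t ω))
    (hWpos : ∀ t ω i j, 0 ≤ W t ω i j) (hWrow : ∀ t ω i, ∑ j, W t ω i j = 1)
    (hmeas : ∀ t, Measurable (W t))
    (hindep : iIndepFun W μ)
    (hident : ∀ s t, IdentDistrib (W s) (W t) μ μ)
    (Wbar : Matrix (Fin ns ⊕ Fin p) (Fin ns ⊕ Fin p) ℝ)
    (hmean : ∀ t i j, ∫ ω, W t ω i j ∂μ = Wbar i j)
    (Bbar : Matrix (Fin p) (Fin ns) ℝ) (Dbar : Matrix (Fin p) (Fin p) ℝ)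
    (hWbar : Wbar = Matrix.fromBlocks 1 0 Bbar Dbar)
    (lam : ℝ) (hlam : lam = ‖Dbar‖) (hlt : lam < 1)
    (Winf : Matrix (Fin ns ⊕ Fin p) (Fin ns ⊕ Fin p) ℝ)
    (hWinf : Winf = Matrix.fromBlocks 1 0 ((1 - Dbar)⁻¹ * Bbar) 0) :
    ∃ C : ℝ, 0 ≤ C ∧ ∀ ti tj : ℕ, ti < tj → ∀ k l,
      |∫ ω, ((prodSeq (fun u => W u ω) 0 tj - Winf)ᵀ *
              (prodSeq (fun u => W u ω) 0 ti - Winf)) k l ∂μ| ≤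
        C * lam ^ (tj - ti) := by
  classical
  haveI : CompleteSpace (Matrix (Fin p) (Fin p) ℝ) := FiniteDimensional.complete ℝ _
  set X : Matrix (Fin p) (Fin ns) ℝ := (1 - Dbar)⁻¹ * Bbar with hXdef
  have hD : ‖Dbar‖ < 1 := hlam ▸ hlt
  have hlam0 : 0 ≤ lam := hlam ▸ norm_nonneg _
  have hu : IsUnit (1 - Dbar) := by
    refine ⟨Units.oneSub Dbar hD, ?_⟩
    simp [Units.val_oneSub]
  have hinv : (1 - Dbar) * (1 - Dbar)⁻¹ = 1 :=
    Matrix.mul_nonsing_inv _ ((Matrix.isUnit_iff_isUnit_det _).mp hu)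
  have hXeq : (1 - Dbar) * X = Bbar := by
    rw [hXdef, ← Matrix.mul_assoc, hinv, Matrix.one_mul]
  have hX : Bbar + Dbar * X = X := by
    have h1 : X - Dbar * X = Bbar := by rw [← hXeq, Matrix.sub_mul, Matrix.one_mul]
    rw [← h1]; abel
  have hWinf' : Winf = fromBlocks 1 0 X 0 := hWinf
  -- constants
  set KW : ℝ := ∑ i, ∑ j, |Winf i j| with hKWdef
  have hKW0 : 0 ≤ KW := Finset.sum_nonneg fun i _ => Finset.sum_nonneg fun j _ => abs_nonneg _
  have hKW : ∀ i j, |Winf i j| ≤ KW := by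
    intro i j
    calc |Winf i j| ≤ ∑ j', |Winf i j'| :=
          Finset.single_le_sum (f := fun j' => |Winf i j'|) (fun j' _ => abs_nonneg _)
            (Finset.mem_univ j)
      _ ≤ KW := Finset.single_le_sum (f := fun i' => ∑ j', |Winf i' j'|)
          (fun i' _ => Finset.sum_nonneg fun j' _ => abs_nonneg _) (Finset.mem_univ i)
  set K : ℝ := 1 + KW with hKdef
  have hK0 : 0 ≤ K := by positivity
  set C1 : ℝ := ‖X‖ + 1 with hC1def
  have hC10 : 0 ≤ C1 := by positivity
  set Nc : ℝ := (Fintype.card (Fin ns ⊕ Fin p) : ℝ) with hNcdef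
  have hNc0 : 0 ≤ Nc := Nat.cast_nonneg _
  refine ⟨Nc ^ 2 * C1 * K ^ 2, by positivity, ?_⟩
  intro ti tj hij k l
  obtain ⟨b, hb⟩ : ∃ b, tj = ti + b + 1 := ⟨tj - ti - 1, by omega⟩
  have hm : tj - ti = b + 1 := by omega
  -- entry bound on the deviation matrix
  have hE : ∀ (a c : Fin ns ⊕ Fin p), |(Wbar ^ (b+1) - Winf) a c| ≤ lam ^ (b+1) * C1 := by
    have hrhs0 : 0 ≤ lam ^ (b+1) * C1 := by positivity
    have hDpow : ‖Dbar ^ (b+1)‖ ≤ lam ^ (b+1) := by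
      rw [hlam]; exact norm_pow_le' Dbar (Nat.succ_pos b)
    intro a c
    rw [hWbar, pow_fromBlocks Bbar Dbar X hX b, hWinf']
    rcases a with i | i <;> rcases c with j | j
    · simpa using hrhs0
    · simpa using hrhs0
    · have : (fromBlocks 1 0 (X - Dbar ^ (b+1) * X) (Dbar ^ (b+1))
          - fromBlocks 1 0 X 0 : Matrix (Fin ns ⊕ Fin p) (Fin ns ⊕ Fin p) ℝ)
          (Sum.inr i) (Sum.inl j) = -((Dbar ^ (b+1) * X) i j) := by
        simp [Matrix.sub_apply]
      rw [this, abs_neg]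
      calc |(Dbar ^ (b+1) * X) i j| ≤ ‖Dbar ^ (b+1) * X‖ := entry_abs_le_l2_opNorm _ i j
        _ ≤ ‖Dbar ^ (b+1)‖ * ‖X‖ := Matrix.l2_opNorm_mul _ _
        _ ≤ lam ^ (b+1) * C1 := by
            apply mul_le_mul hDpow (by rw [hC1def]; linarith) (norm_nonneg _)
              (by positivity)
    · have : (fromBlocks 1 0 (X - Dbar ^ (b+1) * X) (Dbar ^ (b+1))
          - fromBlocks 1 0 X 0 : Matrix (Fin ns ⊕ Fin p) (Fin ns ⊕ Fin p) ℝ)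
          (Sum.inr i) (Sum.inr j) = (Dbar ^ (b+1)) i j := by
        simp [Matrix.sub_apply]
      rw [this]
      calc |(Dbar ^ (b+1)) i j| ≤ ‖Dbar ^ (b+1)‖ := entry_abs_le_l2_opNorm _ i j
        _ ≤ lam ^ (b+1) := hDpow
        _ ≤ lam ^ (b+1) * C1 := le_mul_of_one_le_right (by positivity) (by rw [hC1def]; linarith [norm_nonneg X])
  -- notation
  set Φ : Ω → Matrix (Fin ns ⊕ Fin p) (Fin ns ⊕ Fin p) ℝ :=
    fun ω => prodSeq (fun u => W u ω) 0 ti with hΦdef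
  set Ψ : Ω → Matrix (Fin ns ⊕ Fin p) (Fin ns ⊕ Fin p) ℝ :=
    fun ω => prodSeq (fun u => W u ω) (ti+1) b with hΨdef
  set G : Ω → Matrix (Fin ns ⊕ Fin p) (Fin ns ⊕ Fin p) ℝ := fun ω => Φ ω - Winf with hGdef
  have hsplit : ∀ ω, prodSeq (fun u => W u ω) 0 tj = Ψ ω * Φ ω := by
    intro ω; rw [hb]; exact prodSeq_split _ ti b
  -- measurability and bounds
  have hmeasΦ : ∀ a c, Measurable fun ω => Φ ω a c :=
    fun a c => measurable_prodSeq_entry (fun ω u => W u ω) hmeas 0 ti a c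
  have hmeasG : ∀ a c, Measurable fun ω => G ω a c := by
    intro a c
    simpa [hGdef, Matrix.sub_apply] using (hmeasΦ a c).sub_const (Winf a c)
  have hΦbd : ∀ ω a c, |Φ ω a c| ≤ 1 := fun ω a c =>
    prodSeq_entry_abs_le_one W hWpos hWrow 0 ti ω a c
  have hGbd : ∀ ω a c, |G ω a c| ≤ K := by
    intro ω a c
    rw [hGdef]
    simp only [Matrix.sub_apply]
    calc |Φ ω a c - Winf a c| ≤ |Φ ω a c| + |Winf a c| := abs_sub _ _
      _ ≤ 1 + KW := add_le_add (hΦbd ω a c) (hKW a c)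
  have hintG : ∀ a c, Integrable (fun ω => G ω a c) μ :=
    fun a c => integrable_of_bounded μ (hmeasG a c) K (fun ω => hGbd ω a c)
  have hintΦG : ∀ a c, Integrable (fun ω => Φ ω a k * G ω c l) μ := by
    intro a c
    apply integrable_of_bounded μ ((hmeasΦ a k).mul (hmeasG c l)) K
    intro ω
    rw [Pi.mul_apply, abs_mul]
    calc |Φ ω a k| * |G ω c l| ≤ 1 * K :=
        mul_le_mul (hΦbd ω a k) (hGbd ω c l) (abs_nonneg _) zero_le_one
      _ = K := one_mul K
  -- the key independence consequence
  have hfactor : ∀ (c a : Fin ns ⊕ Fin p),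
      ∫ ω, Ψ ω c a * (Φ ω a k * G ω c l) ∂μ
        = (Wbar ^ (b+1)) c a * ∫ ω, Φ ω a k * G ω c l ∂μ := by
    intro c a
    have hind0 := indepFun_prodSeq W hmeas hindep 0 ti (ti+1) b (by omega)
    have hind : IndepFun (fun ω => Ψ ω c a) (fun ω => Φ ω a k * G ω c l) μ := by
      have := hind0.comp (φ := fun M : Matrix (Fin ns ⊕ Fin p) (Fin ns ⊕ Fin p) ℝ => M c a)
        (ψ := fun M : Matrix (Fin ns ⊕ Fin p) (Fin ns ⊕ Fin p) ℝ => M a k * (M c l - Winf c l))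
        (measurable_entry_of_measurable measurable_id c a)
        (((measurable_entry_of_measurable measurable_id a k)).mul
          ((measurable_entry_of_measurable measurable_id c l).sub measurable_const))
      simpa [hΨdef, hΦdef, hGdef, Function.comp_def, Matrix.sub_apply] using this
    have heq := hind.integral_fun_mul_eq_mul_integral
      (integrable_prodSeq_entry μ W hWpos hWrow hmeas (ti+1) b c a).aestronglyMeasurable
      (hintΦG a c).aestronglyMeasurable
    calc ∫ ω, Ψ ω c a * (Φ ω a k * G ω c l) ∂μ
        = (∫ ω, Ψ ω c a ∂μ) * ∫ ω, Φ ω a k * G ω c l ∂μ := heq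
      _ = (Wbar ^ (b+1)) c a * ∫ ω, Φ ω a k * G ω c l ∂μ := by
          rw [mean_prodSeq μ W hWpos hWrow hmeas hindep Wbar hmean (ti+1) b c a]
  -- pointwise matrix identity
  have hpw : Wbar ^ (b+1) * Winf = Winf := by
    rw [hWbar, hWinf']; exact pow_mul_winf Bbar Dbar X hX (b+1)
  have hWW : Winf * Winf = Winf := by rw [hWinf']; exact winf_mul_block X X 0
  have hWΦ : ∀ ω, Winf * Φ ω = Winf := by
    intro ω
    obtain ⟨B, D, hBD⟩ := prodSeq_block (fun u => W u ω) (fun t => ⟨_, _, hblock t ω⟩) 0 ti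
    show Winf * prodSeq (fun u => W u ω) 0 ti = Winf
    rw [hBD, hWinf', winf_mul_block]
  have hpoint : ∀ ω, (Wbar ^ (b+1) - Winf) * G ω = Wbar ^ (b+1) * Φ ω - Winf := by
    intro ω
    rw [hGdef]
    rw [Matrix.sub_mul, Matrix.mul_sub, Matrix.mul_sub, hpw, hWΦ ω, hWW]
    abel
  -- expansions
  have hexpL : ∀ ω, ((Ψ ω * Φ ω - Winf)ᵀ * G ω) k l
      = ∑ c, ((∑ a, Ψ ω c a * (Φ ω a k * G ω c l)) - Winf c k * G ω c l) := by
    intro ω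
    simp only [Matrix.mul_apply, Matrix.transpose_apply, Matrix.sub_apply, sub_mul,
      Finset.sum_mul, mul_assoc]
  have hexpR : ∀ ω, (((Wbar ^ (b+1) - Winf) * G ω)ᵀ * G ω) k l
      = ∑ c, ((∑ a, (Wbar ^ (b+1)) c a * (Φ ω a k * G ω c l)) - Winf c k * G ω c l) := by
    intro ω
    rw [hpoint ω]
    simp only [Matrix.mul_apply, Matrix.transpose_apply, Matrix.sub_apply, sub_mul,
      Finset.sum_mul, mul_assoc]
  -- integrability of summands
  have hintΨΦG : ∀ c a, Integrable (fun ω => Ψ ω c a * (Φ ω a k * G ω c l)) μ := by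
    intro c a
    apply integrable_of_bounded μ
      ((measurable_prodSeq_entry (fun ω u => W u ω) hmeas (ti+1) b c a).mul
        ((hmeasΦ a k).mul (hmeasG c l))) K
    intro ω
    rw [Pi.mul_apply, Pi.mul_apply, abs_mul, abs_mul]
    have h1 : |prodSeq (fun u => W u ω) (ti+1) b c a| ≤ 1 :=
      prodSeq_entry_abs_le_one W hWpos hWrow (ti+1) b ω c a
    have h6' : (0:ℝ) ≤ |prodSeq (fun u => W u ω) (ti+1) b c a| := abs_nonneg _
    have h2 : |Φ ω a k| ≤ 1 := hΦbd ω a k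
    have h3 : |G ω c l| ≤ K := hGbd ω c l
    calc |prodSeq (fun u => W u ω) (ti+1) b c a| * (|Φ ω a k| * |G ω c l|)
        ≤ 1 * (|Φ ω a k| * |G ω c l|) :=
          mul_le_mul_of_nonneg_right h1 (by positivity)
      _ = |Φ ω a k| * |G ω c l| := one_mul _
      _ ≤ 1 * K := mul_le_mul h2 h3 (abs_nonneg _) zero_le_one
      _ = K := one_mul _
  have hintL : ∀ c, Integrable (fun ω => ∑ a, Ψ ω c a * (Φ ω a k * G ω c l)) μ :=
    fun c => integrable_finset_sum _ fun a _ => hintΨΦG c a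
  -- common value
  have hL : ∫ ω, ((Ψ ω * Φ ω - Winf)ᵀ * G ω) k l ∂μ
      = ∑ c, ((∑ a, (Wbar ^ (b+1)) c a * ∫ ω, Φ ω a k * G ω c l ∂μ)
          - Winf c k * ∫ ω, G ω c l ∂μ) := by
    simp only [hexpL]
    rw [integral_finset_sum
      (f := fun c ω => (∑ a, Ψ ω c a * (Φ ω a k * G ω c l)) - Winf c k * G ω c l)
      Finset.univ (fun c _ => (hintL c).sub ((hintG c l).const_mul _))]
    refine Finset.sum_congr rfl fun c _ => ?_
    have h2 : Integrable (fun ω => Winf c k * G ω c l) μ := (hintG c l).const_mul _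
    rw [integral_sub (hintL c) h2,
      integral_finset_sum Finset.univ (fun a _ => hintΨΦG c a), integral_const_mul]
    simp only [hfactor]
  have hR : ∫ ω, (((Wbar ^ (b+1) - Winf) * G ω)ᵀ * G ω) k l ∂μ
      = ∑ c, ((∑ a, (Wbar ^ (b+1)) c a * ∫ ω, Φ ω a k * G ω c l ∂μ)
          - Winf c k * ∫ ω, G ω c l ∂μ) := by
    simp only [hexpR]
    have hintR : ∀ c, Integrable
        (fun ω => ∑ a, (Wbar ^ (b+1)) c a * (Φ ω a k * G ω c l)) μ :=
      fun c => integrable_finset_sum _ fun a _ => (hintΦG a c).const_mul _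
    rw [integral_finset_sum
      (f := fun c ω => (∑ a, (Wbar ^ (b+1)) c a * (Φ ω a k * G ω c l)) - Winf c k * G ω c l)
      Finset.univ (fun c _ => (hintR c).sub ((hintG c l).const_mul _))]
    refine Finset.sum_congr rfl fun c _ => ?_
    have h2 : Integrable (fun ω => Winf c k * G ω c l) μ := (hintG c l).const_mul _
    rw [integral_sub (hintR c) h2,
      integral_finset_sum Finset.univ (fun a _ => (hintΦG a c).const_mul _),
      integral_const_mul]
    simp only [integral_const_mul]
  -- put it together
  have hmain : ∫ ω, ((prodSeq (fun u => W u ω) 0 tj - Winf)ᵀ *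
        (prodSeq (fun u => W u ω) 0 ti - Winf)) k l ∂μ
      = ∫ ω, (((Wbar ^ (b+1) - Winf) * G ω)ᵀ * G ω) k l ∂μ := by
    have hmid : ∫ ω, ((prodSeq (fun u => W u ω) 0 tj - Winf)ᵀ *
          (prodSeq (fun u => W u ω) 0 ti - Winf)) k l ∂μ
        = ∫ ω, ((Ψ ω * Φ ω - Winf)ᵀ * G ω) k l ∂μ := by
      apply integral_congr_ae
      filter_upwards with ω
      rw [hsplit ω]
    rw [hmid, hL, hR]
  rw [hmain, hm]
  -- final bound
  have hCnl : 0 ≤ lam ^ (b+1) * C1 := by positivity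
  have hbd : ∀ ω, |(((Wbar ^ (b+1) - Winf) * G ω)ᵀ * G ω) k l|
      ≤ Nc ^ 2 * C1 * K ^ 2 * lam ^ (b+1) := by
    intro ω
    have hrow : ∀ c, |((Wbar ^ (b+1) - Winf) * G ω) c k| ≤ Nc * (lam ^ (b+1) * C1 * K) := by
      intro c
      rw [Matrix.mul_apply]
      calc |∑ a, (Wbar ^ (b+1) - Winf) c a * G ω a k|
          ≤ ∑ a, |(Wbar ^ (b+1) - Winf) c a * G ω a k| := Finset.abs_sum_le_sum_abs _ _
        _ ≤ ∑ _a : Fin ns ⊕ Fin p, lam ^ (b+1) * C1 * K := by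
            refine Finset.sum_le_sum fun a _ => ?_
            rw [abs_mul]
            exact mul_le_mul (hE c a) (hGbd ω a k) (abs_nonneg _) hCnl
        _ = Nc * (lam ^ (b+1) * C1 * K) := by
            rw [Finset.sum_const, Finset.card_univ, nsmul_eq_mul, hNcdef]
    calc |(((Wbar ^ (b+1) - Winf) * G ω)ᵀ * G ω) k l|
        = |∑ c, ((Wbar ^ (b+1) - Winf) * G ω) c k * G ω c l| := by
          rw [Matrix.mul_apply]
          simp only [Matrix.transpose_apply]
      _ ≤ ∑ c, |((Wbar ^ (b+1) - Winf) * G ω) c k * G ω c l| := Finset.abs_sum_le_sum_abs _ _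
      _ ≤ ∑ _c : Fin ns ⊕ Fin p, Nc * (lam ^ (b+1) * C1 * K) * K := by
          refine Finset.sum_le_sum fun c _ => ?_
          rw [abs_mul]
          exact mul_le_mul (hrow c) (hGbd ω c l) (abs_nonneg _) (by positivity)
      _ = Nc * (Nc * (lam ^ (b+1) * C1 * K) * K) := by
          rw [Finset.sum_const, Finset.card_univ, nsmul_eq_mul, hNcdef]
      _ = Nc ^ 2 * C1 * K ^ 2 * lam ^ (b+1) := by ring
  have := norm_integral_le_of_norm_le_const (μ := μ)
    (f := fun ω => (((Wbar ^ (b+1) - Winf) * G ω)ᵀ * G ω) k l)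
    (C := Nc ^ 2 * C1 * K ^ 2 * lam ^ (b+1)) (ae_of_all _ fun ω => by
      rw [Real.norm_eq_abs]; exact hbd ω)
  simpa [Real.norm_eq_abs, measure_univ] using this
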